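/- arXiv:1401.6486 — 7 statements merged into one kernel-verified Lean document; each statement's English description precedes it below -/
import Mathlib

section
/- Let char k ≠ 2 and let (R, m) be a local symmetric k-algebra with R/m ≅ k, with symmetric form B. If B'(r,s) = B(r,su) for a unit u, then B and B' are homothetic if and only if u is central in R. -/
/-- Two forms are homothetic if one is obtained from the other by a nonzero scalar
and a change of basis. -/
def Homothetic {k R : Type*} [Field k] [Ring R] [Algebra k R]
    (B B' : LinearMap.BilinForm k R) : Prop :=
  ∃ α : k, α ≠ 0 ∧ ∃ V : R ≃ₗ[k] R, ∀ r s : R, B' r s = α * B (V r) (V s)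

/-- Iterative square-root approximation of `1 + x` in a commutative ring with `2` invertible. -/
lemma sqrt_aux {A : Type*} [CommRing A] (x i : A) (hi : 2 * i = 1)
    (hx : IsNilpotent x) (m : ℕ) :
    ∃ y z s : A, y = 1 + x * z ∧ y * y = 1 + x + x ^ (m + 1) * s := by
  induction m with
  | zero => exact ⟨1, 0, -1, by ring, by ring⟩
  | succ m ih =>
    obtain ⟨y, z, s, hy, he⟩ := ih
    have hyu : IsUnit y := by
      rw [hy]
      exact ((Commute.all x z).isNilpotent_mul_right hx).isUnit_one_add
    set w : A := ↑hyu.unit⁻¹ with hwdef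
    have hw : w * y = 1 := hyu.val_inv_mul
    refine ⟨y - i * (x ^ (m + 1) * s * w), z - i * (x ^ m * s * w),
      i * i * x ^ m * s * s * w * w, ?_, ?_⟩
    · linear_combination hy
    · linear_combination he - x ^ (m + 1) * s * hi - 2 * i * (x ^ (m + 1) * s) * hw

/-- A square root of `1 + x` for nilpotent `x` in a commutative ring with `2` invertible. -/
lemma sqrt_one_add_nilpotent {A : Type*} [CommRing A] (x i : A) (hi : 2 * i = 1)
    (hx : IsNilpotent x) : ∃ y : A, y * y = 1 + x ∧ IsUnit y := by
  obtain ⟨n, hn⟩ := hx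
  obtain ⟨y, z, s, hy, he⟩ := sqrt_aux x i hi ⟨n, hn⟩ n
  have hx1 : x ^ (n + 1) = 0 := by rw [pow_succ, hn, zero_mul]
  have hyy : y * y = 1 + x := by rw [he, hx1, zero_mul, add_zero]
  have hu1 : IsUnit (1 + x) := IsNilpotent.isUnit_one_add ⟨n, hn⟩
  exact ⟨y, hyy, isUnit_of_mul_isUnit_left (hyy ▸ hu1)⟩

/-- In a finite-dimensional local algebra, elements of the maximal ideal are nilpotent. -/
lemma nilp_of_eps_zero (k : Type*) [Field k] (R : Type*) [Ring R] [Algebra k R]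
    [FiniteDimensional k R] (ε : R →ₐ[k] k) (hlocal : ∀ x : R, IsUnit x ↔ ε x ≠ 0)
    (x : R) (hx : ε x = 0) : IsNilpotent x := by
  have hint : IsIntegral k x := Algebra.IsIntegral.isIntegral x
  set p := minpoly k x with hp
  have hp0 : p ≠ 0 := minpoly.ne_zero hint
  set m := p.rootMultiplicity 0 with hm
  set q := p /ₘ (Polynomial.X - Polynomial.C 0) ^ m with hq
  have key : (Polynomial.X - Polynomial.C 0) ^ m * q = p :=
    Polynomial.pow_mul_divByMonic_rootMultiplicity_eq p 0
  have haev : Polynomial.aeval x p = 0 := minpoly.aeval k x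
  have heq : x ^ m * Polynomial.aeval x q = 0 := by
    have := congrArg (Polynomial.aeval x) key
    simpa [haev, map_mul, map_pow] using this
  have hne : Polynomial.eval 0 q ≠ 0 :=
    Polynomial.eval_divByMonic_pow_rootMultiplicity_ne_zero (p := p) 0 hp0
  have hεq : ε (Polynomial.aeval x q) ≠ 0 := by
    have h1 : ε (Polynomial.aeval x q) = Polynomial.aeval (ε x) q :=
      (Polynomial.aeval_algHom_apply ε x q).symm
    rw [h1, hx, Polynomial.coe_aeval_eq_eval]
    exact hne
  have hu : IsUnit (Polynomial.aeval x q) := (hlocal _).mpr hεq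
  refine ⟨m, ?_⟩
  calc x ^ m = x ^ m * Polynomial.aeval x q * ↑hu.unit⁻¹ := by
        rw [mul_assoc, hu.mul_val_inv, mul_one]
    _ = 0 := by rw [heq, zero_mul]

/-- Let `char k ≠ 2` and `(R, m)` be a local symmetric `k`-algebra with `R/m ≅ k`
(encoded by `ε : R →ₐ[k] k` with units exactly the elements outside `m = ker ε`),
with symmetric form `B`.  If `B' r s = B r (s * u)` for a unit `u`, then `B` and `B'`
are homothetic iff `u` is central. -/
theorem stmt8 (k : Type*) [Field k] (h2 : (2 : k) ≠ 0)
    (R : Type*) [Ring R] [Algebra k R] [FiniteDimensional k R]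
    (ε : R →ₐ[k] k) (hlocal : ∀ x : R, IsUnit x ↔ ε x ≠ 0)
    (B : LinearMap.BilinForm k R) (hnd : B.Nondegenerate)
    (hassoc : ∀ r s t : R, B (r * s) t = B r (s * t))
    (hsym : ∀ r s : R, B r s = B s r)
    (u : Rˣ)
    (B' : LinearMap.BilinForm k R) (hB' : ∀ r s : R, B' r s = B r (s * u)) :
    Homothetic B B' ↔ (↑u : R) ∈ Set.center R := by
  constructor
  · rintro ⟨α, hα, V, hV⟩
    rw [Semigroup.mem_center_iff]
    intro s
    have hsymB' : ∀ r t : R, B' r t = B' t r := by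
      intro r t
      rw [hV, hV, hsym]
    have key : ∀ r : R, B r (s * ↑u) = B r (↑u * s) := by
      intro r
      have h1 : B r (s * ↑u) = B s (r * ↑u) := by
        rw [← hB', ← hB', hsymB']
      rw [h1, hsym, hassoc]
    have hzero : s * ↑u - ↑u * s = 0 := by
      apply hnd.1
      intro r
      rw [hsym]
      simp only [map_sub]
      rw [sub_eq_zero]
      exact key r
    exact sub_eq_zero.mp hzero
  · intro hc
    set α : k := ε ↑u with hαdef
    have hα : α ≠ 0 := (hlocal ↑u).mp u.isUnit
    have hcomm : ∀ b : R, b * ↑u = ↑u * b := Semigroup.mem_center_iff.mp hc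
    set x₀ : R := α⁻¹ • (↑u : R) - 1 with hx₀def
    have hx₀c : x₀ ∈ Subalgebra.center k R := by
      rw [Subalgebra.mem_center_iff]
      intro b
      rw [hx₀def]
      rw [mul_sub, sub_mul, mul_one, one_mul, mul_smul_comm, smul_mul_assoc, hcomm b]
    have hεx₀ : ε x₀ = 0 := by
      rw [hx₀def]
      rw [map_sub, map_smul, map_one, ← hαdef, smul_eq_mul, inv_mul_cancel₀ hα, sub_self]
    have hnil : IsNilpotent x₀ := nilp_of_eps_zero k R ε hlocal x₀ hεx₀
    set C := Subalgebra.center k R with hCdef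
    set X : C := ⟨x₀, hx₀c⟩ with hXdef
    have hXnil : IsNilpotent X := by
      obtain ⟨n, hn⟩ := hnil
      exact ⟨n, by ext; simpa using hn⟩
    have hi : (2 : C) * algebraMap k C 2⁻¹ = 1 := by
      rw [← map_ofNat (algebraMap k C) 2, ← map_mul, mul_inv_cancel₀ h2, map_one]
    obtain ⟨y, hy2, hyu⟩ := sqrt_one_add_nilpotent X (algebraMap k C 2⁻¹) hi hXnil
    set yr : R := (y : R) with hyrdef
    have hyru : IsUnit yr := hyu.map C.val
    have hyrc : ∀ b : R, b * yr = yr * b := Subalgebra.mem_center_iff.mp y.2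
    have hy2' : yr * yr = α⁻¹ • (↑u : R) := by
      have := congrArg (Subalgebra.val C) hy2
      simp only [map_mul, map_add, map_one] at this
      rw [hyrdef]
      rw [show ((y : C) : R) * ((y : C) : R) = _ from this]
      show 1 + x₀ = α⁻¹ • (↑u : R)
      rw [hx₀def]; abel
    -- the linear equivalence given by right multiplication by yr
    set V : R ≃ₗ[k] R := LinearEquiv.ofLinear (LinearMap.mulRight k yr)
      (LinearMap.mulRight k (↑hyru.unit⁻¹ : R))
      (by ext r; simp [mul_assoc, hyru.val_inv_mul])
      (by ext r; simp [mul_assoc, hyru.mul_val_inv]) with hVdef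
    refine ⟨α, hα, V, ?_⟩
    intro r s
    have hVr : ∀ t : R, V t = t * yr := fun t => rfl
    rw [hB', hVr, hVr]
    have h1 : B (r * yr) (s * yr) = B r (yr * (s * yr)) := hassoc r yr (s * yr)
    have h2' : yr * (s * yr) = α⁻¹ • (s * ↑u) := by
      rw [← mul_assoc, ← hyrc s, mul_assoc, hy2', mul_smul_comm]
    rw [h1, h2', map_smul, smul_eq_mul, ← mul_assoc, mul_inv_cancel₀ hα, one_mul]
end

section
/- Let char k ≠ 2 and let (R, m) be a local symmetric k-algebra with R/m ≅ k. Then any two nondegenerate associative symmetric bilinear forms on R are homothetic. -/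
/-- In a commutative ring in which `2` is invertible, `1 + n` has a square root
which is a unit, whenever `n` is nilpotent. -/
lemma sqrt_one_add_nilpotent_s9 {A : Type*} [CommRing A] (h2 : IsUnit (2 : A))
    {n : A} (hn : IsNilpotent n) : ∃ v : A, IsUnit v ∧ v ^ 2 = 1 + n := by
  obtain ⟨t, ht⟩ := h2.exists_right_inv
  obtain ⟨m, hm⟩ := hn
  have key : ∀ j : ℕ, ∃ v c : A, IsUnit v ∧ v ^ 2 = 1 + n + c * n ^ (2 ^ j) := by
    intro j
    induction j with
    | zero => exact ⟨1, -1, isUnit_one, by ring⟩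
    | succ j ih =>
      obtain ⟨v, c, hv, hveq⟩ := ih
      obtain ⟨w, hw⟩ := hv.exists_right_inv
      refine ⟨v - c * n ^ (2 ^ j) * t * w, c ^ 2 * t ^ 2 * w ^ 2, ?_, ?_⟩
      · have h1 : v - c * n ^ (2 ^ j) * t * w
            = v * (1 - c * n ^ (2 ^ j) * t * w ^ 2) := by
          calc v - c * n ^ (2 ^ j) * t * w
              = v - c * n ^ (2 ^ j) * t * ((v * w) * w) := by rw [hw]; ring
            _ = v * (1 - c * n ^ (2 ^ j) * t * w ^ 2) := by ring
        rw [h1]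
        refine hv.mul (IsNilpotent.isUnit_one_sub ⟨m, ?_⟩)
        have hnm : (n ^ (2 ^ j)) ^ m = 0 := by
          rw [← pow_mul, mul_comm, pow_mul, hm, zero_pow (Nat.pow_pos (n := j) (by norm_num)).ne']
        calc (c * n ^ (2 ^ j) * t * w ^ 2) ^ m
            = (c * t * w ^ 2) ^ m * (n ^ (2 ^ j)) ^ m := by ring
          _ = 0 := by rw [hnm, mul_zero]
      · have hpow : (n ^ (2 ^ j)) ^ 2 = n ^ (2 ^ (j + 1)) := by
          rw [← pow_mul, pow_succ]
        calc (v - c * n ^ (2 ^ j) * t * w) ^ 2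
            = v ^ 2 - (c * n ^ (2 ^ j)) * ((2 * t) * (v * w))
              + (c ^ 2 * t ^ 2 * w ^ 2) * (n ^ (2 ^ j)) ^ 2 := by ring
          _ = 1 + n + (c ^ 2 * t ^ 2 * w ^ 2) * n ^ (2 ^ (j + 1)) := by
              rw [ht, hw, hveq, hpow]; ring
  obtain ⟨v, c, hv, hveq⟩ := key m
  have hz : n ^ (2 ^ m) = 0 := by
    have hle : m ≤ 2 ^ m := le_of_lt (Nat.lt_two_pow_self (n := m))
    calc n ^ (2 ^ m) = n ^ m * n ^ (2 ^ m - m) := by rw [← pow_add]; congr 1; omega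
      _ = 0 := by rw [hm, zero_mul]
  exact ⟨v, hv, by rw [hveq, hz, mul_zero, add_zero]⟩

/-- Let `char k ≠ 2` and `(R, m)` be a local `k`-algebra with `R/m ≅ k` (encoded by
`ε : R →ₐ[k] k` with units exactly the elements outside `m = ker ε`).  Then any two
nondegenerate associative symmetric bilinear forms on `R` are homothetic. -/
theorem stmt9 (k : Type*) [Field k] (h2 : (2 : k) ≠ 0)
    (R : Type*) [Ring R] [Algebra k R] [FiniteDimensional k R]
    (ε : R →ₐ[k] k) (hlocal : ∀ x : R, IsUnit x ↔ ε x ≠ 0)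
    (B B' : LinearMap.BilinForm k R)
    (hnd : B.Nondegenerate) (hassoc : ∀ r s t : R, B (r * s) t = B r (s * t))
    (hsym : ∀ r s : R, B r s = B s r)
    (hnd' : B'.Nondegenerate) (hassoc' : ∀ r s t : R, B' (r * s) t = B' r (s * t))
    (hsym' : ∀ r s : R, B' r s = B' s r) :
    Homothetic B B' := by
  classical
  have hBF : ∀ a b : R, B a b = B (a * b) 1 := fun a b => by rw [hassoc, mul_one]
  have hBF' : ∀ a b : R, B' a b = B' (a * b) 1 := fun a b => by rw [hassoc', mul_one]
  have htr : ∀ a b : R, B (a * b) 1 = B (b * a) 1 := fun a b => by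
    rw [← hBF, hsym, hBF]
  have htr' : ∀ a b : R, B' (a * b) 1 = B' (b * a) 1 := fun a b => by
    rw [← hBF', hsym', hBF']
  -- the element u with B x u = B' x 1
  set φ : Module.Dual k R := (LinearMap.flip B') 1 with hφ
  set u : R := (LinearMap.BilinForm.toDual B hnd).symm φ with hudef
  have hu : ∀ x : R, B u x = B' x 1 := fun x =>
    LinearMap.BilinForm.apply_toDual_symm_apply (hB := hnd) φ x
  have huB : ∀ x : R, B x u = B' x 1 := fun x => by rw [hsym]; exact hu x
  -- u is central
  have hcen : ∀ a : R, a * u = u * a := by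
    intro a
    have h0 : ∀ b : R, B (a * u - u * a) b = 0 := by
      intro b
      have e1 : B (a * u) b = B (b * a) u := by
        rw [hBF (a * u) b, htr, ← mul_assoc, ← hBF]
      have e2 : B (u * a) b = B (b * a) u := by
        rw [hBF (u * a) b, mul_assoc, htr, ← hBF (a * b) u, huB (a * b), htr' a b, ← huB (b * a)]
      rw [map_sub, LinearMap.sub_apply, e1, e2, sub_self]
    have := hnd.1 _ h0
    rw [sub_eq_zero] at this
    exact this
  -- u is a unit
  have huu : IsUnit u := by
    have hinj : Function.Injective (LinearMap.mulRight k u) := by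
      rw [← LinearMap.ker_eq_bot, LinearMap.ker_eq_bot']
      intro x hx
      rw [LinearMap.mulRight_apply] at hx
      refine hnd'.1 x fun r => ?_
      rw [hsym', hBF', ← huB, hassoc, hx, map_zero]
    obtain ⟨w, hw⟩ := (LinearMap.injective_iff_surjective.mp hinj) 1
    rw [LinearMap.mulRight_apply] at hw
    exact ⟨⟨u, w, by rw [← hcen w]; exact hw, hw⟩, rfl⟩
  set α : k := ε u with hα
  have hα0 : α ≠ 0 := (hlocal u).mp huu
  set n : R := α⁻¹ • u - 1 with hn
  have hεn : ε n = 0 := by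
    rw [hn, map_sub, map_smul, map_one, smul_eq_mul, ← hα, inv_mul_cancel₀ hα0, sub_self]
  have hncen : ∀ a : R, a * n = n * a := by
    intro a
    rw [hn, mul_sub, sub_mul, mul_one, one_mul, mul_smul_comm, smul_mul_assoc, hcen a]
  -- n is nilpotent
  have hnnil : IsNilpotent n := by
    set p : Polynomial k := (Algebra.lmul k R n).charpoly with hp
    have hp0 : Polynomial.aeval n p = 0 := by
      have h1 : (Algebra.lmul k R) (Polynomial.aeval n p) = 0 := by
        rw [← Polynomial.aeval_algHom_apply]
        exact LinearMap.aeval_self_charpoly _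
      have h2 := congrArg (fun f : Module.End k R => f 1) h1
      simpa using h2
    have hpne : p ≠ 0 := (LinearMap.charpoly_monic _).ne_zero
    set m : ℕ := p.rootMultiplicity 0 with hmdef
    set q : Polynomial k := p /ₘ (Polynomial.X - Polynomial.C 0) ^ m with hq
    have hfac : (Polynomial.X - Polynomial.C 0) ^ m * q = p :=
      Polynomial.pow_mul_divByMonic_rootMultiplicity_eq p 0
    have hq0 : q.eval 0 ≠ 0 :=
      Polynomial.eval_divByMonic_pow_rootMultiplicity_ne_zero 0 hpne
    have hmul : n ^ m * Polynomial.aeval n q = 0 := by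
      have := congrArg (Polynomial.aeval n) hfac
      rw [map_mul, map_pow, map_sub, Polynomial.aeval_X, Polynomial.aeval_C,
        map_zero, sub_zero, hp0] at this
      exact this
    have hqu : IsUnit (Polynomial.aeval n q) := by
      rw [hlocal]
      have := Polynomial.aeval_algHom_apply ε n q
      rw [hεn] at this
      rw [← this, Polynomial.coe_aeval_eq_eval]
      exact hq0
    obtain ⟨w', hw'⟩ := hqu.exists_right_inv
    refine ⟨m, ?_⟩
    calc n ^ m = n ^ m * (Polynomial.aeval n q * w') := by rw [hw', mul_one]
      _ = (n ^ m * Polynomial.aeval n q) * w' := by rw [mul_assoc]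
      _ = 0 := by rw [hmul, zero_mul]
  -- square root in the center
  set C := Subalgebra.center k R with hC
  have h2C : IsUnit (2 : C) := by
    have h2eq : (2 : C) = algebraMap k C 2 := by rw [map_ofNat]
    refine IsUnit.of_mul_eq_one (algebraMap k C 2⁻¹) ?_
    rw [h2eq, ← map_mul, mul_inv_cancel₀ h2, map_one]
  have hnC : n ∈ C := Subalgebra.mem_center_iff.mpr hncen
  have hnCnil : IsNilpotent (⟨n, hnC⟩ : C) := by
    obtain ⟨m, hm⟩ := hnnil
    exact ⟨m, Subtype.ext (by rw [SubmonoidClass.coe_pow]; exact hm)⟩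
  obtain ⟨v, hvu, hveq⟩ := sqrt_one_add_nilpotent_s9 h2C hnCnil
  set V : R := (v : R) with hV
  have hVu : IsUnit V := hvu.map C.val
  have hV2 : V * V = 1 + n := by
    have := congrArg (Subtype.val) hveq
    rw [SubmonoidClass.coe_pow, pow_two] at this
    exact this
  have hVcen : ∀ a : R, a * V = V * a := Subalgebra.mem_center_iff.mp v.2
  obtain ⟨vu, hvueq⟩ := hVu
  -- the linear equivalence
  have hcomp1 : (LinearMap.mulLeft k V).comp (LinearMap.mulLeft k (↑vu⁻¹ : R))
      = LinearMap.id := by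
    ext x
    simp only [LinearMap.comp_apply, LinearMap.mulLeft_apply, LinearMap.id_apply,
      ← mul_assoc, ← hvueq]
    rw [vu.mul_inv, one_mul]
  have hcomp2 : (LinearMap.mulLeft k (↑vu⁻¹ : R)).comp (LinearMap.mulLeft k V)
      = LinearMap.id := by
    ext x
    simp only [LinearMap.comp_apply, LinearMap.mulLeft_apply, LinearMap.id_apply,
      ← mul_assoc, ← hvueq]
    rw [vu.inv_mul, one_mul]
  refine ⟨α, hα0, LinearEquiv.ofLinear (LinearMap.mulLeft k V)
    (LinearMap.mulLeft k (↑vu⁻¹ : R)) hcomp1 hcomp2, ?_⟩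
  intro r s
  simp only [LinearEquiv.ofLinear_apply, LinearMap.mulLeft_apply]
  have hmulV : (V * r) * (V * s) = (1 + n) * (r * s) := by
    have h3 : r * (V * s) = V * (r * s) := by rw [← mul_assoc, hVcen r, mul_assoc]
    rw [mul_assoc, h3, ← mul_assoc, hV2]
  have huval : u = α • ((1 : R) + n) := by
    rw [hn, add_sub_cancel, smul_smul, mul_inv_cancel₀ hα0, one_smul]
  calc B' r s = B' (r * s) 1 := hBF' r s
    _ = B (r * s) u := (huB (r * s)).symm
    _ = α * B (r * s) (1 + n) := by rw [huval, map_smul, smul_eq_mul]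
    _ = α * B ((1 + n) * (r * s)) 1 := by rw [hBF, htr]
    _ = α * B ((V * r) * (V * s)) 1 := by rw [hmulV]
    _ = α * B (V * r) (V * s) := by rw [← hBF]
  -- note: LinearEquiv.ofLinear applied gives mulLeft
end

section
/- Let char k ≠ 2 and let (R, m) be a local symmetric k-algebra with R/m ≅ k. Then all nondegenerate associative bilinear forms on R are pairwise homothetic if and only if R is commutative. -/
open Polynomial in
lemma aux_nilpotent {k R : Type*} [Field k] [Ring R] [Algebra k R] [FiniteDimensional k R]
    (ε : R →ₐ[k] k) (hlocal : ∀ x : R, IsUnit x ↔ ε x ≠ 0)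
    {n : R} (hn : ε n = 0) : IsNilpotent n := by
  have hint : IsIntegral k n := IsIntegral.of_finite k n
  have hp0 : minpoly k n ≠ 0 := minpoly.ne_zero hint
  obtain ⟨q, hq, hndvd⟩ := (minpoly k n).exists_eq_pow_rootMultiplicity_mul_and_not_dvd hp0 0
  rw [map_zero, sub_zero] at hq hndvd
  have hq0 : q.coeff 0 ≠ 0 := by simpa [Polynomial.X_dvd_iff] using hndvd
  have heval : n ^ ((minpoly k n).rootMultiplicity 0) * aeval n q = 0 := by
    have h := minpoly.aeval k n
    rw [hq] at h
    simpa using h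
  have hεq : ε (aeval n q) = q.coeff 0 := by
    rw [← aeval_algHom_apply, hn]
    simp [aeval_def, eval₂_at_zero]
  have hunit : IsUnit (aeval n q) := (hlocal _).mpr (by rw [hεq]; exact hq0)
  refine ⟨(minpoly k n).rootMultiplicity 0, ?_⟩
  calc n ^ ((minpoly k n).rootMultiplicity 0)
      = n ^ ((minpoly k n).rootMultiplicity 0) * (aeval n q * ↑hunit.unit⁻¹) := by
        rw [IsUnit.mul_val_inv, mul_one]
    _ = (n ^ ((minpoly k n).rootMultiplicity 0) * aeval n q) * ↑hunit.unit⁻¹ := by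
        rw [mul_assoc]
    _ = 0 := by rw [heval, zero_mul]

lemma aux_sqrt {S : Type*} [CommRing S] (h2 : IsUnit (2 : S)) {n : S} (hn : IsNilpotent n) :
    ∃ v : S, IsUnit v ∧ v * v = 1 + n := by
  obtain ⟨N, hN⟩ := hn
  have key : ∀ M : ℕ, ∃ v w : S, IsUnit v ∧ v * v = 1 + n + w * n ^ (M + 1) := by
    intro M
    induction M with
    | zero => exact ⟨1, -1, isUnit_one, by ring⟩
    | succ M ih =>
      obtain ⟨v, w, hv, hvw⟩ := ih
      have h2v : IsUnit (2 * v) := h2.mul hv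
      set i := Ring.inverse (2 * v) with hi
      have h1 : (2 * v) * i = 1 := Ring.mul_inverse_cancel _ h2v
      refine ⟨v - i * (w * n ^ (M + 1)), i * i * w * w * n ^ M, ?_, ?_⟩
      · have hnil : IsNilpotent (-(i * (w * n ^ (M + 1)))) := by
          have h3 : IsNilpotent (-(i * w * n ^ M) * n) :=
            (Commute.all _ _).isNilpotent_mul_left ⟨N, hN⟩
          convert h3 using 1; ring
        have := hnil.isUnit_add_left_of_commute hv (Commute.all _ _)
        convert this using 1; ring
      · linear_combination hvw - w * n ^ (M + 1) * h1
  obtain ⟨v, w, hv, hvw⟩ := key N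
  refine ⟨v, hv, ?_⟩
  rw [hvw, pow_succ, hN, zero_mul, mul_zero, add_zero]

/-- Let `char k ≠ 2` and `(R, m)` be a local symmetric `k`-algebra with `R/m ≅ k`
(encoded by `ε : R →ₐ[k] k` with units exactly the elements outside `m = ker ε`;
symmetric means `R` carries a nondegenerate associative symmetric form `B₀`).
Then all nondegenerate associative bilinear forms on `R` are pairwise homothetic
iff `R` is commutative. -/
theorem stmt10 (k : Type*) [Field k] (h2 : (2 : k) ≠ 0)
    (R : Type*) [Ring R] [Algebra k R] [FiniteDimensional k R]
    (ε : R →ₐ[k] k) (hlocal : ∀ x : R, IsUnit x ↔ ε x ≠ 0)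
    (B₀ : LinearMap.BilinForm k R) (hnd₀ : B₀.Nondegenerate)
    (hassoc₀ : ∀ r s t : R, B₀ (r * s) t = B₀ r (s * t))
    (hsym₀ : ∀ r s : R, B₀ r s = B₀ s r) :
    (∀ B B' : LinearMap.BilinForm k R,
        B.Nondegenerate → (∀ r s t : R, B (r * s) t = B r (s * t)) →
        B'.Nondegenerate → (∀ r s t : R, B' (r * s) t = B' r (s * t)) →
        Homothetic B B') ↔
      ∀ a b : R, a * b = b * a := by
  have hR1 : (1 : R) ≠ 0 := by
    intro h
    have : (1 : k) = 0 := by rw [← map_one ε, h, map_zero]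
    exact one_ne_zero this
  constructor
  · -- all homothetic → commutative
    intro H
    have key : ∀ u : R, IsUnit u → ∀ r : R, u * r = r * u := by
      intro u hu r
      set B' : LinearMap.BilinForm k R := B₀ ∘ₗ LinearMap.mulLeft k u with hB'def
      have hB' : ∀ r s : R, B' r s = B₀ (u * r) s := fun r s => rfl
      have hnd' : B'.Nondegenerate := by
        refine ⟨fun x hx => ?_, fun y hy => ?_⟩
        have hux : u * x = 0 := hnd₀.1 _ fun y => hx y
        obtain ⟨uu, huu⟩ := hu
        calc x = ↑uu⁻¹ * (↑uu * x) := (Units.inv_mul_cancel_left uu x).symm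
          _ = 0 := by rw [huu, hux, mul_zero]
        obtain ⟨uu, huu⟩ := hu
        refine hnd₀.2 y fun z => ?_
        have := hy (↑uu⁻¹ * z)
        rwa [hB', ← mul_assoc, ← huu, Units.mul_inv, one_mul] at this
      have hassoc' : ∀ r s t : R, B' (r * s) t = B' r (s * t) := by
        intro r s t
        rw [hB', hB', ← mul_assoc, hassoc₀]
      obtain ⟨α, hα, V, hV⟩ := H B₀ B' hnd₀ hassoc₀ hnd' hassoc'
      have hsym' : ∀ r s : R, B' r s = B' s r := by
        intro r s
        rw [hV, hV, hsym₀]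
      have : ∀ s : R, B₀ (u * r - r * u) s = 0 := by
        intro s
        have h1 : B₀ (u * r) s = B₀ (r * u) s := by
          have := hsym' r s
          rw [hB', hB'] at this
          rw [this, hsym₀, ← hassoc₀]
        rw [map_sub, LinearMap.sub_apply, h1, sub_self]
      exact sub_eq_zero.mp (hnd₀.1 _ this)
    -- every element is central
    have central : ∀ x r : R, x * r = r * x := by
      intro x r
      by_cases hx : IsUnit x
      · exact key x hx r
      · have hεx : ε x = 0 := by
          by_contra h
          exact hx ((hlocal x).mpr h)
        have h1x : IsUnit (1 + x) := by
          refine (hlocal _).mpr ?_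
          rw [map_add, map_one, hεx, add_zero]
          exact one_ne_zero
        have := key (1 + x) h1x r
        rw [add_mul, mul_add, one_mul, mul_one] at this
        exact add_left_cancel this
    exact fun a b => central a b
  · -- commutative → all homothetic
    intro hcomm B B' hnd hassoc hnd' hassoc'
    letI : CommRing R := { ‹Ring R› with mul_comm := hcomm }
    -- represent forms via units
    have repr : ∀ C : LinearMap.BilinForm k R, C.Nondegenerate →
        (∀ r s t : R, C (r * s) t = C r (s * t)) →
        ∃ u : R, IsUnit u ∧ ∀ r s : R, C r s = B₀ (u * r) s := by
      intro C hndC hassocC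
      set u : R := (B₀.toDual hnd₀).symm (C 1) with hu_def
      have hu : ∀ y : R, B₀ u y = C 1 y := fun y =>
        LinearMap.BilinForm.apply_toDual_symm_apply (C 1) y
      have hCr : ∀ r s : R, C r s = B₀ (u * r) s := by
        intro r s
        have h1 : C r s = C 1 (r * s) := by
          have h := hassocC 1 r s
          rwa [one_mul] at h
        rw [h1, ← hu, hassoc₀]
      refine ⟨u, ?_, hCr⟩
      by_contra hnu
      have hεu : ε u = 0 := by
        by_contra h
        exact hnu ((hlocal u).mpr h)
      obtain ⟨N, hN⟩ := aux_nilpotent ε hlocal hεu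
      have hdesc : ∀ j : ℕ, u ^ j = 0 → False := by
        intro j
        induction j with
        | zero => intro h; exact hR1 (by simpa using h)
        | succ j ih =>
          intro h
          refine ih (hndC.1 _ fun s => ?_)
          rw [hCr, ← pow_succ', h]
          simp
      exact hdesc N hN
    obtain ⟨u, hu, hBu⟩ := repr B hnd hassoc
    obtain ⟨u', hu', hBu'⟩ := repr B' hnd' hassoc'
    -- w = u⁻¹ u'
    set w : R := ↑hu.unit⁻¹ * u' with hw_def
    have hεw : ε w ≠ 0 := by
      have h1 : IsUnit ((hu.unit⁻¹ : Rˣ) : R) := Units.isUnit _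
      rw [hw_def, map_mul]
      exact mul_ne_zero ((hlocal _).mp h1) ((hlocal _).mp hu')
    set c : k := ε w with hc_def
    set n : R := c⁻¹ • w - 1 with hn_def
    have hεn : ε n = 0 := by
      rw [hn_def, map_sub, map_smul, map_one, ← hc_def, smul_eq_mul,
        inv_mul_cancel₀ hεw, sub_self]
    have h2R : IsUnit (2 : R) := by
      refine (hlocal _).mpr ?_
      rw [map_ofNat]
      exact h2
    obtain ⟨v, hv, hvsq⟩ := aux_sqrt h2R (aux_nilpotent ε hlocal hεn)
    have hwv : w = c • (v * v) := by
      rw [hvsq, hn_def, add_comm, sub_add_cancel, smul_smul, mul_inv_cancel₀ hεw, one_smul]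
    have hu'w : u' = u * w := by
      rw [hw_def, ← mul_assoc, IsUnit.mul_val_inv, one_mul]
    -- build the linear equivalence r ↦ v * r
    obtain ⟨vu, hvu⟩ := hv
    refine ⟨c, hεw, LinearEquiv.ofLinear (LinearMap.mulLeft k v)
      (LinearMap.mulLeft k ((vu⁻¹ : Rˣ) : R)) ?_ ?_, ?_⟩
    · ext x
      simp only [LinearMap.coe_comp, Function.comp_apply, LinearMap.mulLeft_apply,
        LinearMap.id_coe, id_eq]
      rw [← hvu, Units.mul_inv_cancel_left]
    · ext x
      simp only [LinearMap.coe_comp, Function.comp_apply, LinearMap.mulLeft_apply,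
        LinearMap.id_coe, id_eq]
      rw [← hvu, Units.inv_mul_cancel_left]
    · intro r s
      simp only [LinearEquiv.ofLinear_apply, LinearMap.mulLeft_apply]
      have hL : B' r s = c * B₀ (u * (v * v) * r) s := by
        rw [hBu', hu'w, hwv]
        rw [mul_smul_comm, smul_mul_assoc, map_smul, LinearMap.smul_apply, smul_eq_mul,
          mul_assoc]
      have hRr : B (v * r) (v * s) = B₀ (u * (v * v) * r) s := by
        rw [hBu, ← hassoc₀]
        congr 1
        ring
      rw [hL, hRr]
end

section
/- Let R be a Frobenius k-algebra with form B and Nakayama automorphism σ. If σⁿ equals the inner automorphism I_a (r ↦ a r a⁻¹) for some unit a of R, then σ(a) = a. -/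
/-- If the Nakayama automorphism `σ` of a nondegenerate associative form `B` satisfies
`σⁿ = I_a` (conjugation by a unit `a`), then `σ a = a`. -/
theorem stmt12 (k : Type*) [Field k] (R : Type*) [Ring R] [Algebra k R]
    [FiniteDimensional k R]
    (B : LinearMap.BilinForm k R) (hnd : B.Nondegenerate)
    (hassoc : ∀ r s t : R, B (r * s) t = B r (s * t))
    (σ : R ≃ₐ[k] R) (hσ : ∀ r s : R, B r s = B s (σ r))
    (n : ℕ) (a : Rˣ)
    (hn : ∀ r : R, (⇑σ)^[n] r = ↑a * r * ↑a⁻¹) :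
    σ ↑a = ↑a := by
  -- B is σ-invariant
  have hinv : ∀ r s : R, B r s = B (σ r) (σ s) := fun r s => by
    rw [hσ r s, hσ s (σ r)]
  -- hence σⁿ-invariant
  have hinvn : ∀ m : ℕ, ∀ r s : R, B r s = B ((⇑σ)^[m] r) ((⇑σ)^[m] s) := by
    intro m
    induction m with
    | zero => intro r s; simp
    | succ m ih =>
        intro r s
        rw [Function.iterate_succ_apply', Function.iterate_succ_apply',
          ← hinv, ih]
  -- σⁿ fixes a
  have hfa : (⇑σ)^[n] (↑a : R) = ↑a := by
    rw [hn]; rw [Units.mul_inv_cancel_right]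
  -- key computation
  have key : ∀ x : R, B x ((↑a : R) - σ ↑a) = 0 := by
    intro x
    have h1 : B x (↑a : R) = B ((↑a : R) * x * ↑a⁻¹) ↑a := by
      rw [hinvn n x ↑a, hn x, hfa]
    have h2 : B ((↑a : R) * x * ↑a⁻¹) ↑a = B ((↑a : R) * x) 1 := by
      rw [hassoc]; rw [Units.inv_mul]
    have h3 : B ((↑a : R) * x) 1 = B (↑a : R) x := by
      rw [hassoc]; rw [mul_one]
    have h4 : B (↑a : R) x = B x (σ ↑a) := hσ _ _
    simp only [map_sub]
    rw [h1, h2, h3, h4]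
    ring
  -- conclude by nondegeneracy
  have hc : (↑a : R) - σ ↑a = 0 := by
    have hd : σ.symm ((↑a : R) - σ ↑a) = 0 := by
      apply hnd.1
      intro y
      rw [hσ]
      simp [key y]
    have := congrArg σ hd
    simpa using this
  exact (sub_eq_zero.mp hc).symm
end

section
/- Let (R, m) be a finite-dimensional local k-algebra with R/m ≅ k, σ a k-algebra automorphism with σⁿ = I_a for some unit a, and suppose char k does not divide n. If x is a unit of R with σ(x) = x and whose image in R/m ≅ k is an n-th power in k∖{0}, then there exists a unit u ∈ R with σ(u) = u and uⁿ = x; hence N_σ(u) = x, where N_σ(u) = u σ(u) ⋯ σ^{n-1}(u). -/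
private lemma binom_aux {A : Type*} [CommRing A] (t : A) :
    ∀ n : ℕ, ∃ w : A, (1 + t) ^ n = 1 + n * t + t ^ 2 * w := by
  intro n
  induction n with
  | zero => exact ⟨0, by simp⟩
  | succ n ih =>
    obtain ⟨w, hw⟩ := ih
    refine ⟨w + n + w * t, ?_⟩
    rw [pow_succ, hw]
    push_cast
    ring

private lemma nth_root_aux {A : Type*} [CommRing A] (n : ℕ) (c : A) (hc : (n : A) * c = 1) :
    ∀ j : ℕ, ∀ s : A, s ^ (2 ^ j) = 0 → ∃ u : A, u ^ n = 1 + s := by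
  intro j
  induction j with
  | zero =>
    intro s hs
    norm_num at hs
    exact ⟨1, by simp [hs]⟩
  | succ j ih =>
    intro s hs
    obtain ⟨w, hw⟩ := binom_aux (c * s) n
    have h1 : (1 + c * s) ^ n = 1 + s + s ^ 2 * (c ^ 2 * w) := by
      linear_combination hw + s * hc
    have hcsnil : IsNilpotent (c * s) := ⟨2 ^ (j + 1), by rw [mul_pow, hs, mul_zero]⟩
    obtain ⟨U, hU⟩ := hcsnil.isUnit_one_add
    have hUn : (↑U : A) ^ n = 1 + s + s ^ 2 * (c ^ 2 * w) := by rw [hU, h1]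
    have hUinv : (↑U : A) ^ n * (↑U⁻¹ : A) ^ n = 1 := by
      rw [← mul_pow, Units.mul_inv, one_pow]
    have hs' : (-((↑U⁻¹ : A) ^ n * (s ^ 2 * (c ^ 2 * w)))) ^ (2 ^ j) = 0 := by
      have h2 : (-((↑U⁻¹ : A) ^ n * (s ^ 2 * (c ^ 2 * w))))
          = s ^ 2 * (-((↑U⁻¹ : A) ^ n * (c ^ 2 * w))) := by ring
      rw [h2, mul_pow, ← pow_mul]
      have h3 : 2 * 2 ^ j = 2 ^ (j + 1) := by ring
      rw [h3, hs, zero_mul]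
    obtain ⟨v, hv⟩ := ih _ hs'
    refine ⟨↑U * v, ?_⟩
    rw [mul_pow, hv]
    linear_combination hUn - (s ^ 2 * (c ^ 2 * w)) * hUinv

private lemma nth_root {A : Type*} [CommRing A] (n : ℕ) (c : A) (hc : (n : A) * c = 1)
    (s : A) (hs : IsNilpotent s) : ∃ u : A, u ^ n = 1 + s := by
  obtain ⟨m, hm⟩ := hs
  apply nth_root_aux n c hc m s
  have hle : m ≤ 2 ^ m := Nat.le_of_lt (Nat.lt_two_pow_self (n := m))
  rw [← Nat.add_sub_cancel' hle, pow_add, hm, zero_mul]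

private lemma nilp_aux {k R : Type*} [Field k] [Ring R] [Algebra k R] [FiniteDimensional k R]
    (ε : R →ₐ[k] k) (hlocal : ∀ y : R, IsUnit y ↔ ε y ≠ 0) (s : R) (hs : ε s = 0) :
    IsNilpotent s := by
  have hint : IsIntegral k s := IsIntegral.of_finite k s
  set p := minpoly k s with hp
  have hp0 : p ≠ 0 := minpoly.ne_zero hint
  have haev : Polynomial.aeval s p = 0 := minpoly.aeval k s
  obtain ⟨q, hq, hndvd⟩ := p.exists_eq_pow_rootMultiplicity_mul_and_not_dvd hp0 0
  rw [Polynomial.C_0, sub_zero] at hq hndvd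
  have hq0 : q.coeff 0 ≠ 0 := by rwa [Polynomial.X_dvd_iff] at hndvd
  have key : s ^ (p.rootMultiplicity 0) * Polynomial.aeval s q = 0 := by
    have h := haev
    rw [hq, map_mul, map_pow, Polynomial.aeval_X] at h
    exact h
  have hunit : IsUnit (Polynomial.aeval s q) := by
    rw [hlocal]
    have h1 : ε (Polynomial.aeval s q) = Polynomial.aeval (ε s) q :=
      (Polynomial.aeval_algHom_apply ε s q).symm
    rw [h1, hs]
    simpa [Polynomial.coeff_zero_eq_eval_zero] using hq0
  obtain ⟨V, hV⟩ := hunit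
  refine ⟨p.rootMultiplicity 0, ?_⟩
  rw [← hV] at key
  calc s ^ p.rootMultiplicity 0
      = s ^ p.rootMultiplicity 0 * ↑V * ↑V⁻¹ := by
        rw [mul_assoc, Units.mul_inv, mul_one]
    _ = 0 := by rw [key, zero_mul]

/-- Let `(R, m)` be a finite-dimensional local `k`-algebra with `R/m ≅ k` (encoded via
`ε : R →ₐ[k] k` with units exactly the elements outside `m = ker ε`), let `σ` be a
`k`-algebra automorphism with `σⁿ = I_a` for a unit `a`, and suppose `char k ∤ n`
(i.e. `(n : k) ≠ 0`).  If `x` is a unit fixed by `σ` whose residue is an `n`-th power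
in `k∖{0}`, then there is a unit `u` fixed by `σ` with `uⁿ = x`; hence `N_σ(u) = x`. -/
theorem stmt14 (k : Type*) [Field k]
    (R : Type*) [Ring R] [Algebra k R] [FiniteDimensional k R]
    (ε : R →ₐ[k] k) (hlocal : ∀ y : R, IsUnit y ↔ ε y ≠ 0)
    (σ : R ≃ₐ[k] R) (n : ℕ) (a : Rˣ)
    (hn : ∀ r : R, (⇑σ)^[n] r = ↑a * r * ↑a⁻¹)
    (hchar : (n : k) ≠ 0)
    (x : Rˣ) (hx : σ ↑x = ↑x) (hres : ∃ β : k, β ≠ 0 ∧ ε ↑x = β ^ n) :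
    ∃ u : Rˣ, σ ↑u = ↑u ∧ (↑u : R) ^ n = ↑x ∧
      ((List.range n).map (fun i => (⇑σ)^[i] ↑u)).prod = (↑x : R) := by
  obtain ⟨β, hβ, hβn⟩ := hres
  have hγβ : β⁻¹ * β = 1 := inv_mul_cancel₀ hβ
  set s : R := algebraMap k R (β⁻¹ ^ n) * ↑x - 1 with hsdef
  have hεs : ε s = 0 := by
    rw [hsdef, map_sub, map_mul, AlgHom.commutes, map_one, hβn]
    simp only [Algebra.algebraMap_self, RingHom.id_apply]
    rw [← mul_pow, hγβ, one_pow, sub_self]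
  have hσs : σ s = s := by
    rw [hsdef, map_sub, map_mul, AlgEquiv.commutes, map_one, hx]
  have hnil : IsNilpotent s := nilp_aux ε hlocal s hεs
  -- work inside the commutative subalgebra generated by s
  letI instCR : CommRing (Algebra.adjoin k ({s} : Set R)) :=
    Algebra.adjoinCommRingOfComm k (by
      rintro a ha b hb
      rw [Set.mem_singleton_iff] at ha hb
      rw [ha, hb])
  have hsmem : s ∈ Algebra.adjoin k ({s} : Set R) := Algebra.self_mem_adjoin_singleton k s
  have hcmem : algebraMap k R ((n : k)⁻¹) ∈ Algebra.adjoin k ({s} : Set R) :=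
    Subalgebra.algebraMap_mem _ _
  have hsAnil : IsNilpotent (⟨s, hsmem⟩ : Algebra.adjoin k ({s} : Set R)) := by
    obtain ⟨m, hm⟩ := hnil
    exact ⟨m, Subtype.ext (by exact hm)⟩
  have hc : ((n : ℕ) : Algebra.adjoin k ({s} : Set R)) *
      (⟨algebraMap k R ((n : k)⁻¹), hcmem⟩ : Algebra.adjoin k ({s} : Set R)) = 1 := by
    apply Subtype.ext
    show ((n : ℕ) : R) * algebraMap k R ((n : k)⁻¹) = 1
    rw [← map_natCast (algebraMap k R), ← map_mul, mul_inv_cancel₀ hchar, map_one]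
  obtain ⟨u', hu'⟩ := nth_root n _ hc _ hsAnil
  have huR : (↑u' : R) ^ n = 1 + s := by
    have h := congrArg Subtype.val hu'
    exact h
  have hfix : ∀ y ∈ Algebra.adjoin k ({s} : Set R), σ y = y := by
    intro y hy
    induction hy using Algebra.adjoin_induction with
    | mem z hz => rw [Set.mem_singleton_iff] at hz; rw [hz]; exact hσs
    | algebraMap r => exact AlgEquiv.commutes σ r
    | add y z _ _ hy hz => rw [map_add, hy, hz]
    | mul y z _ _ hy hz => rw [map_mul, hy, hz]
  have hσu : σ (↑u' : R) = ↑u' := hfix _ u'.2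
  have hεu : ε (↑u' : R) ≠ 0 := by
    intro h0
    have h1 : (ε (↑u' : R)) ^ n = 1 := by
      rw [← map_pow, huR, map_add, map_one, hεs, add_zero]
    have hn0 : n ≠ 0 := by rintro rfl; exact hchar (by norm_num)
    rw [h0, zero_pow hn0, eq_comm] at h1
    exact one_ne_zero h1
  have hUu : IsUnit (algebraMap k R β * ↑u') := by
    rw [hlocal, map_mul, AlgHom.commutes]
    simp only [Algebra.algebraMap_self, RingHom.id_apply]
    exact mul_ne_zero hβ hεu
  obtain ⟨U, hU⟩ := hUu
  have hσU : σ ↑U = (↑U : R) := by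
    rw [hU, map_mul, AlgEquiv.commutes, hσu]
  have hcomm : Commute (algebraMap k R β) (↑u' : R) := Algebra.commutes β (↑u' : R)
  have hUpow : (↑U : R) ^ n = ↑x := by
    rw [hU, hcomm.mul_pow, huR, ← map_pow]
    have h1s : (1 : R) + s = algebraMap k R (β⁻¹ ^ n) * ↑x := by rw [hsdef]; abel
    rw [h1s, ← mul_assoc, ← map_mul, ← mul_pow, mul_inv_cancel₀ hβ, one_pow, map_one, one_mul]
  refine ⟨U, hσU, hUpow, ?_⟩
  have hiter : ∀ i, (⇑σ)^[i] (↑U : R) = ↑U := fun i => Function.iterate_fixed hσU i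
  have hmap : (List.range n).map (fun i => (⇑σ)^[i] (↑U : R)) = List.replicate n (↑U : R) := by
    refine List.eq_replicate_iff.mpr ⟨by simp, ?_⟩
    intro b hb
    simp only [List.mem_map] at hb
    obtain ⟨i, _, rfl⟩ := hb
    exact hiter i
  rw [hmap, List.prod_replicate, hUpow]
end

section
/- Let R be a Frobenius k-algebra with an ideal m such that R/m ≅ k, with form B whose Nakayama automorphism σ satisfies σⁿ = Id. Let B'(r,s) = B(r,su) for a unit u, and define N_σ(u) = u σ(u) ⋯ σ^{n-1}(u). If B and B' are homothetic, then N_σ(u) is central in R. -/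
/-- Let `R` be a Frobenius `k`-algebra with an ideal `m` such that `R/m ≅ k` (encoded
via an algebra map `ε : R →ₐ[k] k`, whose kernel is `m`), with nondegenerate associative
form `B` whose Nakayama automorphism `σ` satisfies `σⁿ = Id`.  If `B' r s = B r (s * u)`
for a unit `u` and `B`, `B'` are homothetic, then `N_σ(u) = u σ(u) ⋯ σ^{n-1}(u)` is
central in `R`. -/
theorem stmt16 (k : Type*) [Field k]
    (R : Type*) [Ring R] [Algebra k R] [FiniteDimensional k R]
    (ε : R →ₐ[k] k)
    (B : LinearMap.BilinForm k R) (hnd : B.Nondegenerate)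
    (hassoc : ∀ r s t : R, B (r * s) t = B r (s * t))
    (σ : R ≃ₐ[k] R) (hσ : ∀ r s : R, B r s = B s (σ r))
    (n : ℕ) (hn : ∀ r : R, (⇑σ)^[n] r = r)
    (u : Rˣ)
    (B' : LinearMap.BilinForm k R) (hB' : ∀ r s : R, B' r s = B r (s * u))
    (hhom : Homothetic B B') :
    ((List.range n).map (fun i => (⇑σ)^[i] ↑u)).prod ∈ Set.center R := by
  obtain ⟨α, hα, V, hV⟩ := hhom
  -- right nondegeneracy of B
  have hrn : ∀ x : R, (∀ s : R, B s x = 0) → x = 0 := by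
    intro x hx
    have h0 : σ.symm x = 0 := by
      apply hnd.1
      intro s
      have := hσ (σ.symm x) s
      rwa [σ.apply_symm_apply, hx s] at this
    calc x = σ (σ.symm x) := (σ.apply_symm_apply x).symm
    _ = σ 0 := by rw [h0]
    _ = 0 := map_zero σ
  have hrn2 : ∀ x y : R, (∀ s : R, B s x = B s y) → x = y := by
    intro x y h
    have hxy : x - y = 0 := hrn _ (fun s => by rw [map_sub, h s, sub_self])
    exact sub_eq_zero.mp hxy
  -- the key identity: σ ∘ V = V ∘ (u σ(·) u⁻¹)
  have key : ∀ r : R, σ (V r) = V (↑u * σ r * ↑u⁻¹) := by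
    intro r
    apply hrn2
    intro s
    obtain ⟨t, rfl⟩ : ∃ t, V t = s := ⟨V.symm s, V.apply_symm_apply s⟩
    have h1 : α * B (V t) (σ (V r)) = B r (t * ↑u) := by
      rw [← hσ (V r) (V t), ← hV r t, hB' r t]
    have h2 : α * B (V t) (V (↑u * σ r * ↑u⁻¹)) = B r (t * ↑u) := by
      rw [← hV t, hB' t]
      have hc : (↑u * σ r * ↑u⁻¹) * (↑u : R) = ↑u * σ r := by
        rw [mul_assoc, Units.inv_mul, mul_one]
      rw [hc, ← hassoc t ↑u (σ r), ← hσ r (t * ↑u)]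
    exact mul_left_cancel₀ hα (h1.trans h2.symm)
  -- units machinery
  let fm : R →* R := { toFun := ⇑σ, map_one' := map_one σ, map_mul' := map_mul σ }
  let W : ℕ → Rˣ := fun i => (Units.map fm)^[i] u
  let Nl : ℕ → Rˣ := fun m => ((List.range m).map W).prod
  have hW : ∀ i, ((W i : Rˣ) : R) = (⇑σ)^[i] (↑u : R) := by
    intro i
    induction i with
    | zero => rfl
    | succ m ih =>
      show ((((Units.map fm)^[m+1] u) : Rˣ) : R) = (⇑σ)^[m+1] (↑u : R)
      rw [Function.iterate_succ_apply', Function.iterate_succ_apply']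
      rw [Units.coe_map]
      show σ ((W m : Rˣ) : R) = σ ((⇑σ)^[m] (↑u : R))
      rw [ih]
  have hNlsucc : ∀ m, Nl (m + 1) = u * Units.map fm (Nl m) := by
    intro m
    show ((List.range (m+1)).map W).prod = u * Units.map fm ((List.range m).map W).prod
    rw [List.range_succ_eq_map, List.map_cons, List.prod_cons, List.map_map,
      map_list_prod (Units.map fm), List.map_map]
    congr 1
    refine congrArg List.prod (List.map_congr_left fun i _ => ?_)
    show W (i + 1) = Units.map fm (W i)
    exact Function.iterate_succ_apply' (Units.map fm) i u
  -- main induction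
  have claim : ∀ m (r : R), (⇑σ)^[m] (V r) = V (↑(Nl m) * (⇑σ)^[m] r * ↑((Nl m)⁻¹)) := by
    intro m
    induction m with
    | zero =>
      intro r
      show V r = V (↑(1 : Rˣ) * r * ↑((1 : Rˣ)⁻¹))
      simp
    | succ m ih =>
      intro r
      rw [Function.iterate_succ_apply', ih r, key, hNlsucc m]
      congr 1
      rw [map_mul, map_mul, mul_inv_rev, ← MonoidHom.map_inv, Units.val_mul, Units.val_mul,
        Units.coe_map, Units.coe_map]
      show ↑u * (σ ↑(Nl m) * σ ((⇑σ)^[m] r) * σ ↑(Nl m)⁻¹) * ↑u⁻¹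
          = ↑u * σ ↑(Nl m) * (⇑σ)^[m+1] r * (σ ↑(Nl m)⁻¹ * ↑u⁻¹)
      rw [Function.iterate_succ_apply']
      simp [mul_assoc]
  -- conclude
  have hfix : ∀ r : R, r = ↑(Nl n) * r * ↑((Nl n)⁻¹) := by
    intro r
    have := claim n r
    rw [hn (V r), hn r] at this
    exact V.injective this
  have hcomm : ∀ g : R, g * ↑(Nl n) = ↑(Nl n) * g := by
    intro g
    conv_lhs => rw [hfix g]
    rw [mul_assoc, mul_assoc, Units.inv_mul, mul_one]
  have hcoe : ((List.range n).map (fun i => (⇑σ)^[i] (↑u : R))).prod = ↑(Nl n) := by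
    show _ = ((Units.coeHom R) ((List.range n).map W).prod)
    rw [map_list_prod, List.map_map]
    exact congrArg List.prod (List.map_congr_left fun i _ => (hW i).symm)
  rw [hcoe]
  exact Semigroup.mem_center_iff.mpr (fun g => hcomm g)
end

section
/- Let R = ℂ⟨x,y⟩/(x² = 0, y² = 0, xyx = yxy), a six-dimensional ℂ-algebra with basis {1, x, y, xy, yx, xyx}, with Frobenius form B(r,s) = λ(rs) where λ picks the coefficient of xyx. The Nakayama automorphism σ swaps x and y, so σ² = Id. For ε ≠ 0 and u = 1 + εx, the norm N_σ(u) = u σ(u) = 1 + εx + εy + ε²xy is not central in R (it fails to commute with x). -/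
/-- The extended Nakayama–Nesbitt algebra `R = ℂ⟨x,y⟩/(x² = y² = 0, xyx = yxy)`,
a six-dimensional `ℂ`-algebra with basis `{1, x, y, xy, yx, xyx}`.  For `ε ≠ 0` and
`u = 1 + εx`, the norm `N_σ(u) = u σ(u) = (1 + εx)(1 + εy) = 1 + εx + εy + ε²xy`
(the Nakayama automorphism `σ` swaps `x` and `y`) is not central in `R`: it fails
to commute with `x`. -/
theorem stmt17 (R : Type*) [Ring R] [Algebra ℂ R]
    (x y : R) (hx2 : x ^ 2 = 0) (hy2 : y ^ 2 = 0) (hxyx : x * y * x = y * x * y)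
    (b : Module.Basis (Fin 6) ℂ R)
    (hb0 : b 0 = 1) (hb1 : b 1 = x) (hb2 : b 2 = y)
    (hb3 : b 3 = x * y) (hb4 : b 4 = y * x) (hb5 : b 5 = x * y * x)
    (ε : ℂ) (hε : ε ≠ 0) :
    (1 + ε • x) * (1 + ε • y) = 1 + ε • x + ε • y + (ε ^ 2) • (x * y) ∧
    ¬ Commute ((1 + ε • x) * (1 + ε • y)) x ∧
    (1 + ε • x) * (1 + ε • y) ∉ Set.center R := by
  have hexp : (1 + ε • x) * (1 + ε • y) = 1 + ε • x + ε • y + (ε ^ 2) • (x * y) := by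
    simp only [mul_add, add_mul, one_mul, mul_one, smul_mul_assoc, mul_smul_comm,
      smul_smul, ← pow_two]
    module
  have hnc : ¬ Commute ((1 + ε • x) * (1 + ε • y)) x := by
    intro h
    rw [Commute, SemiconjBy, hexp] at h
    have hx2' : x * x = 0 := by rw [← pow_two]; exact hx2
    have h' : x + ε • (x * y) = x + ε • (y * x) + (ε ^ 2) • (x * y * x) := by
      have lhs : x * (1 + ε • x + ε • y + (ε ^ 2) • (x * y)) = x + ε • (x * y) := by
        rw [mul_add, mul_add, mul_add, mul_one, mul_smul_comm, mul_smul_comm,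
          mul_smul_comm, hx2', ← mul_assoc, hx2']
        simp
      have rhs : (1 + ε • x + ε • y + (ε ^ 2) • (x * y)) * x
          = x + ε • (y * x) + (ε ^ 2) • (x * y * x) := by
        rw [add_mul, add_mul, add_mul, one_mul, smul_mul_assoc, smul_mul_assoc,
          smul_mul_assoc, hx2']
        simp
      rw [lhs, rhs] at h
      exact h.symm
    have hz : (-ε) • b 3 + ε • b 4 + (ε ^ 2) • b 5 = 0 := by
      rw [hb3, hb4, hb5]
      have : ε • (y * x) + (ε ^ 2) • (x * y * x) - ε • (x * y) = 0 := by
        have := h'.symm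
        linear_combination (norm := module) this
      linear_combination (norm := module) this
    have hli := b.linearIndependent
    rw [Fintype.linearIndependent_iff] at hli
    have := hli (fun i => if i = 3 then -ε else if i = 4 then ε else if i = 5 then ε ^ 2 else 0)
      (by
        rw [Fin.sum_univ_six]
        simpa using hz) 4
    simp at this
    exact hε this
  refine ⟨hexp, hnc, fun hc => hnc ?_⟩
  exact (Set.mem_center_iff.mp hc).comm x
end
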